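/- Let q ≥ 3, let 1 ≤ r ≤ n, and let U ⊆ H_n(F_{q²}) be the set of all hermitian matrices of rank r. Suppose L ⊆ U is a leaf of some hermitian matrix of rank r − 1, and Φ : U → U is a bijection such that rank(Φ(A) − Φ(B)) = 1 ⟺ rank(A − B) = 1 for all A, B ∈ U. Then there is exactly one hermitian matrix N of rank r − 1 such that Φ(L) = {Φ(C) : C ∈ L} is a leaf of N. -/

import Mathlib

open Matrix

/-- Conjugate transpose with respect to the involution `x ↦ x ^ q` on `F = F_{q²}`. -/
def ctrans (q : ℕ) {F : Type*} [Field F] {m n : Type*} (A : Matrix m n F) : Matrix n m F :=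
  Matrix.of fun i j => (A j i) ^ q

/-- `A` is hermitian with respect to the involution `x ↦ x ^ q`. -/
def IsHerm (q : ℕ) {F : Type*} [Field F] {n : Type*} (A : Matrix n n F) : Prop :=
  ctrans q A = A

/-- The rank-one hermitian matrix `x x*`. -/
def outerq (q : ℕ) {F : Type*} [Field F] {n : Type*} (x : n → F) : Matrix n n F :=
  Matrix.of fun i j => x i * (x j) ^ q

/-- The set `{A + λ x x* : λ ∈ F_q, λ ≠ 0}` (the fixed field `F_q` is `{λ : λ ^ q = λ}`). -/
def leafSet (q : ℕ) {F : Type*} [Field F] {n : Type*} (A : Matrix n n F) (x : n → F) :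
    Set (Matrix n n F) :=
  {B | ∃ lam : F, lam ^ q = lam ∧ lam ≠ 0 ∧ B = A + lam • outerq q x}

/-- `L` is a leaf of the hermitian matrix `A`: it is of the form
`{A + λ x x* : λ ∈ F_q, λ ≠ 0}` for a nonzero vector `x` and all of its members have
rank `rank A + 1`. -/
def IsLeafOf (q : ℕ) {F : Type*} [Field F] {n : Type*} [Fintype n] (L : Set (Matrix n n F))
    (A : Matrix n n F) : Prop :=
  ∃ x : n → F, x ≠ 0 ∧ L = leafSet q A x ∧ ∀ B ∈ L, B.rank = A.rank + 1

set_option linter.unusedSectionVars false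
namespace HermAux
variable {q : ℕ} {F : Type*} [Field F] {m : Type*} [Fintype m] [DecidableEq m]

lemma matrank_zero_iff (A : Matrix m m F) : A.rank = 0 ↔ A = 0 := by
  constructor
  · intro h
    have hr : Module.finrank F (LinearMap.range A.mulVecLin) = 0 := h
    have hbot : LinearMap.range A.mulVecLin = ⊥ := by
      rwa [Submodule.finrank_eq_zero] at hr
    have hzero : ∀ v, A *ᵥ v = 0 := by
      intro v
      have : A.mulVecLin v ∈ LinearMap.range A.mulVecLin := LinearMap.mem_range_self _ v
      rw [hbot] at this
      simpa using this
    ext i j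
    have := congrFun (hzero (Pi.single j 1)) i
    simpa [Matrix.mulVec_single] using this
  · rintro rfl; exact Matrix.rank_zero

lemma outerq_mulVec (x : m → F) (v : m → F) :
    outerq q x *ᵥ v = (∑ j, x j ^ q * v j) • x := by
  ext i
  simp [outerq, Matrix.mulVec, dotProduct, Finset.mul_sum, mul_comm, mul_assoc, mul_left_comm]

lemma outerq_ne_zero {x : m → F} (hx : x ≠ 0) : outerq q x ≠ 0 := by
  obtain ⟨i, hi⟩ : ∃ i, x i ≠ 0 := by
    by_contra h; push_neg at h; exact hx (funext fun i => h i)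
  intro h
  have := congrFun (congrFun h i) i
  simp only [outerq, Matrix.of_apply, Matrix.zero_apply] at this
  exact (mul_ne_zero hi (pow_ne_zero _ hi)) this

lemma rank_smul_outerq_le (c : F) (x : m → F) : (c • outerq q x).rank ≤ 1 := by
  have hfac : c • outerq q x =
      (Matrix.of fun i (_ : Fin 1) => c * x i) * (Matrix.of fun (_ : Fin 1) j => x j ^ q) := by
    ext i j
    simp [Matrix.mul_apply, outerq, mul_assoc]
  rw [hfac]
  calc ((Matrix.of fun i (_ : Fin 1) => c * x i) * (Matrix.of fun (_ : Fin 1) j => x j ^ q)).rank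
      ≤ (Matrix.of fun i (_ : Fin 1) => c * x i).rank := Matrix.rank_mul_le_left _ _
    _ ≤ Fintype.card (Fin 1) := Matrix.rank_le_card_width _
    _ = 1 := by simp

lemma rank_smul_outerq {c : F} {x : m → F} (hc : c ≠ 0) (hx : x ≠ 0) :
    (c • outerq q x).rank = 1 := by
  have h1 := rank_smul_outerq_le (q := q) c x
  have h0 : (c • outerq q x) ≠ 0 := by
    intro h
    apply outerq_ne_zero hx (q := q)
    have := smul_eq_zero.mp h
    tauto
  have := (not_iff_not.mpr (matrank_zero_iff (c • outerq q x))).mpr h0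
  omega

lemma rank_le_of_ker_le {A B : Matrix m m F}
    (h : LinearMap.ker A.mulVecLin ≤ LinearMap.ker B.mulVecLin) : B.rank ≤ A.rank := by
  have hA := LinearMap.finrank_range_add_finrank_ker A.mulVecLin
  have hB := LinearMap.finrank_range_add_finrank_ker B.mulVecLin
  have hk : Module.finrank F (LinearMap.ker A.mulVecLin) ≤
      Module.finrank F (LinearMap.ker B.mulVecLin) := Submodule.finrank_mono h
  have hA' : A.rank = Module.finrank F (LinearMap.range A.mulVecLin) := rfl
  have hB' : B.rank = Module.finrank F (LinearMap.range B.mulVecLin) := rfl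
  omega

lemma rank_add_smul_outerq_le (M : Matrix m m F) (u : m → F) (c : F) :
    (M + c • outerq q (M *ᵥ u)).rank ≤ M.rank := by
  set y := M *ᵥ u with hy
  have hfac : M + c • outerq q y = M * (1 + Matrix.of fun k j => c * u k * y j ^ q) := by
    rw [Matrix.mul_add, Matrix.mul_one]
    congr 1
    ext i j
    simp only [Matrix.smul_apply, outerq, Matrix.of_apply, Matrix.mul_apply, smul_eq_mul]
    rw [hy]
    simp only [Matrix.mulVec, dotProduct]
    rw [Finset.sum_mul, Finset.mul_sum]
    apply Finset.sum_congr rfl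
    intro k _
    ring
  rw [hfac]
  exact Matrix.rank_mul_le_left _ _

lemma rank_center_le {M : Matrix m m F} {y : m → F} {e₁ e₂ : F} {s : ℕ}
    (hne : e₁ ≠ e₂)
    (h1 : (M + e₁ • outerq q y).rank = s) (h2 : (M + e₂ • outerq q y).rank = s) :
    M.rank ≤ s := by
  by_cases hy : ∃ u, (M + e₂ • outerq q y) *ᵥ u = y
  · obtain ⟨u, hu⟩ := hy
    have hM : M = (M + e₂ • outerq q y) + (-e₂) • outerq q ((M + e₂ • outerq q y) *ᵥ u) := by
      rw [hu]; module
    calc M.rank = ((M + e₂ • outerq q y) + (-e₂) • outerq q ((M + e₂ • outerq q y) *ᵥ u)).rank := by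
          rw [← hM]
      _ ≤ (M + e₂ • outerq q y).rank := rank_add_smul_outerq_le _ _ _
      _ = s := h2
  · push_neg at hy
    have : M.rank ≤ (M + e₁ • outerq q y).rank := by
      apply rank_le_of_ker_le
      intro v hv
      rw [LinearMap.mem_ker, Matrix.mulVecLin_apply] at hv
      have hdot : (∑ j, y j ^ q * v j) = 0 := by
        by_contra hd
        have hQ2 : (M + e₂ • outerq q y) *ᵥ v = ((e₂ - e₁) * (∑ j, y j ^ q * v j)) • y := by
          have hsplit : M + e₂ • outerq q y = (M + e₁ • outerq q y) + (e₂ - e₁) • outerq q y := by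
            module
          rw [hsplit, Matrix.add_mulVec, hv, zero_add, Matrix.smul_mulVec,
            outerq_mulVec, smul_smul]
        have hc : (e₂ - e₁) * (∑ j, y j ^ q * v j) ≠ 0 :=
          mul_ne_zero (sub_ne_zero.mpr (Ne.symm hne)) hd
        apply hy (((e₂ - e₁) * (∑ j, y j ^ q * v j))⁻¹ • v)
        rw [Matrix.mulVec_smul, hQ2, smul_smul, inv_mul_cancel₀ hc, one_smul]
      rw [LinearMap.mem_ker, Matrix.mulVecLin_apply]
      have : M *ᵥ v = ((M + e₁ • outerq q y) *ᵥ v) - e₁ • (outerq q y *ᵥ v) := by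
        rw [Matrix.add_mulVec, Matrix.smul_mulVec]; abel
      rw [this, hv, outerq_mulVec, hdot, zero_smul, smul_zero, sub_zero]
    omega

lemma matrank_add_le (A B : Matrix m m F) : (A + B).rank ≤ A.rank + B.rank := by
  have hle : LinearMap.range (A + B).mulVecLin ≤
      LinearMap.range A.mulVecLin ⊔ LinearMap.range B.mulVecLin := by
    rintro w ⟨v, rfl⟩
    rw [Matrix.mulVecLin_apply, Matrix.add_mulVec]
    exact Submodule.add_mem_sup ⟨v, rfl⟩ ⟨v, rfl⟩
  calc (A + B).rank
      = Module.finrank F (LinearMap.range (A + B).mulVecLin) := rfl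
    _ ≤ Module.finrank F ↥(LinearMap.range A.mulVecLin ⊔ LinearMap.range B.mulVecLin) :=
        Submodule.finrank_mono hle
    _ ≤ Module.finrank F (LinearMap.range A.mulVecLin) +
        Module.finrank F (LinearMap.range B.mulVecLin) :=
        Submodule.finrank_add_le_finrank_add_finrank _ _
    _ = A.rank + B.rank := rfl

lemma exists_span_of_rank_le_one {A : Matrix m m F} (h : A.rank ≤ 1) :
    ∃ w : m → F, ∀ v : m → F, (∃ z, A *ᵥ z = v) → ∃ c : F, v = c • w := by
  have h' : Module.finrank F (LinearMap.range A.mulVecLin) ≤ 1 := h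
  rw [finrank_le_one_iff] at h'
  obtain ⟨v₀, hv₀⟩ := h'
  refine ⟨(v₀ : m → F), ?_⟩
  rintro v ⟨z, rfl⟩
  obtain ⟨c, hc⟩ := hv₀ ⟨A *ᵥ z, ⟨z, rfl⟩⟩
  exact ⟨c, by simpa using (congrArg Subtype.val hc).symm⟩

lemma herm_entry {H : Matrix m m F} (hH : IsHerm q H) (i j : m) :
    (H j i) ^ q = H i j := congrFun (congrFun hH i) j

lemma herm_rank_one (hqq : ∀ a : F, (a ^ q) ^ q = a)
    (hnorm : ∀ a : F, a ^ q = a → a ≠ 0 → ∃ b : F, b ≠ 0 ∧ b * b ^ q = a)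
    {H : Matrix m m F} (hH : IsHerm q H) (h1 : H.rank = 1) :
    ∃ y : m → F, y ≠ 0 ∧ H = outerq q y := by
  obtain ⟨w, hw⟩ := exists_span_of_rank_le_one h1.le
  have hcol : ∀ j, ∃ c : F, (fun i => H i j) = c • w := by
    intro j
    apply hw
    exact ⟨Pi.single j 1, by rw [Matrix.mulVec_single]; funext i; simp⟩
  choose t ht using hcol
  have hHij : ∀ i j, H i j = t j * w i := by
    intro i j
    have := congrFun (ht j) i
    simpa using this
  obtain ⟨i₀, j₀, hij⟩ : ∃ i j, H i j ≠ 0 := by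
    by_contra hcon
    push_neg at hcon
    have : H = 0 := by ext i j; simpa using hcon i j
    rw [this] at h1
    simp at h1
  have hwi₀ : w i₀ ≠ 0 := by
    intro h0
    apply hij
    rw [hHij, h0, mul_zero]
  have htj₀ : t j₀ ≠ 0 := by
    intro h0
    apply hij
    rw [hHij, h0, zero_mul]
  have hherm : ∀ i j, t j * w i = t i ^ q * w j ^ q := by
    intro i j
    have := herm_entry hH i j
    rw [hHij i j, hHij j i, mul_pow] at this
    exact this.symm
  obtain ⟨a, ha⟩ : ∃ a : F, a = t i₀ ^ q / w i₀ := ⟨_, rfl⟩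
  have htfor : ∀ j, t j = a * w j ^ q := by
    intro j
    rw [ha]
    field_simp
    linear_combination hherm i₀ j
  have hHij' : ∀ i j, H i j = a * w i * w j ^ q := by
    intro i j
    rw [hHij i j, htfor j]; ring
  have ha0 : a ≠ 0 := by
    intro h0
    apply htj₀
    rw [htfor j₀, h0, zero_mul]
  have haS : a ^ q = a := by
    have h1 := hherm i₀ i₀
    rw [htfor i₀] at h1
    rw [mul_pow, hqq (w i₀)] at h1
    -- h1 : a * w i₀ ^ q * w i₀ = a ^ q * w i₀ * w i₀ ^ q
    have hwq : w i₀ ^ q * w i₀ ≠ 0 := mul_ne_zero (pow_ne_zero _ hwi₀) hwi₀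
    apply mul_right_cancel₀ hwq
    linear_combination -h1
  obtain ⟨b, hb0, hba⟩ := hnorm a haS ha0
  refine ⟨b • w, ?_, ?_⟩
  · intro h0
    apply hwi₀
    have := congrFun h0 i₀
    simp only [Pi.smul_apply, smul_eq_mul, Pi.zero_apply] at this
    exact (mul_eq_zero.mp this).resolve_left hb0
  · ext i j
    show H i j = (b • w) i * ((b • w) j) ^ q
    rw [hHij' i j]
    simp only [Pi.smul_apply, smul_eq_mul, mul_pow]
    linear_combination (-(w i * w j ^ q)) * hba

lemma pow_q_inj (hqq : ∀ a : F, (a ^ q) ^ q = a) {x y : F} (h : x ^ q = y ^ q) : x = y := by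
  have := congrArg (fun z : F => z ^ q) h
  simpa [hqq] using this

lemma exists_smul_eq_of_rank_le_one (hqq : ∀ a : F, (a ^ q) ^ q = a)
    {u v : m → F} (hu : u ≠ 0) (hv : v ≠ 0)
    (h : (outerq q u - outerq q v).rank ≤ 1) : ∃ t : F, t ≠ 0 ∧ v = t • u := by
  suffices hs : ∃ t : F, v = t • u by
    obtain ⟨t, rfl⟩ := hs
    exact ⟨t, fun h0 => hv (by rw [h0, zero_smul]), rfl⟩
  by_contra hcon
  push_neg at hcon
  have huniq : ∀ a b a' b' : F, a • u + b • v = a' • u + b' • v → a = a' ∧ b = b' := by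
    intro a b a' b' habe
    have hzero : (a - a') • u + (b - b') • v = 0 := by
      rw [← sub_eq_zero] at habe
      linear_combination (norm := module) habe
    have hbb : b = b' := by
      by_contra hbb
      have hb0 : b - b' ≠ 0 := sub_ne_zero.mpr hbb
      apply hcon ((b - b')⁻¹ * (-(a - a')))
      have h2 : (b - b') • v = (-(a - a')) • u := by
        linear_combination (norm := module) hzero
      calc v = (b - b')⁻¹ • ((b - b') • v) := by
              rw [smul_smul, inv_mul_cancel₀ hb0, one_smul]
        _ = (b - b')⁻¹ • ((-(a - a')) • u) := by rw [h2]
        _ = ((b - b')⁻¹ * (-(a - a'))) • u := by rw [smul_smul]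
    refine ⟨?_, hbb⟩
    rw [hbb, sub_self, zero_smul, add_zero] at hzero
    rcases smul_eq_zero.mp hzero with h1 | h1
    · have := sub_eq_zero.mp h1; exact this
    · exact absurd h1 hu
  obtain ⟨w, hw⟩ := exists_span_of_rank_le_one h
  have hcols : ∀ k, ∃ c : F, (u k ^ q) • u - (v k ^ q) • v = c • w := by
    intro k
    apply hw
    refine ⟨Pi.single k 1, ?_⟩
    rw [Matrix.mulVec_single]
    funext i
    simp only [MulOpposite.op_one, one_smul, Matrix.col_apply, Matrix.sub_apply, outerq, Matrix.of_apply, Pi.sub_apply, Pi.smul_apply,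
      smul_eq_mul]
    ring
  choose c hc using hcols
  obtain ⟨k₀, hk₀⟩ : ∃ k, u k ≠ 0 := by
    by_contra h0; push_neg at h0; exact hu (funext fun k => h0 k)
  have hX0 : (u k₀ ^ q) • u - (v k₀ ^ q) • v ≠ 0 := by
    intro h0
    have h0' : (u k₀ ^ q) • u + (-(v k₀ ^ q)) • v = (0 : F) • u + (0 : F) • v := by
      linear_combination (norm := module) h0
    have := (huniq _ _ _ _ h0').1
    exact pow_ne_zero q hk₀ this
  have hck₀ : c k₀ ≠ 0 := by
    intro h0
    apply hX0
    rw [hc k₀, h0, zero_smul]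
  have hstep : ∀ l, c k₀ * u l ^ q = c l * u k₀ ^ q ∧
      c k₀ * v l ^ q = c l * v k₀ ^ q := by
    intro l
    have h1 : c k₀ • ((u l ^ q) • u - (v l ^ q) • v) =
        c l • ((u k₀ ^ q) • u - (v k₀ ^ q) • v) := by
      rw [hc l, hc k₀, smul_smul, smul_smul, mul_comm]
    have h2 : (c k₀ * u l ^ q) • u + (-(c k₀ * v l ^ q)) • v =
        (c l * u k₀ ^ q) • u + (-(c l * v k₀ ^ q)) • v := by
      linear_combination (norm := module) h1
    obtain ⟨e1, e2⟩ := huniq _ _ _ _ h2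
    exact ⟨e1, by linear_combination -e2⟩
  apply hcon (v k₀ / u k₀)
  funext l
  obtain ⟨e1, e2⟩ := hstep l
  have hcross : v l ^ q * u k₀ ^ q = u l ^ q * v k₀ ^ q := by
    apply mul_left_cancel₀ hck₀
    linear_combination u k₀ ^ q * e2 - v k₀ ^ q * e1
  have hq2 : (v l * u k₀) ^ q = (u l * v k₀) ^ q := by
    rw [mul_pow, mul_pow]; exact hcross
  have heq := pow_q_inj hqq hq2
  show v l = (v k₀ / u k₀) * u l
  field_simp
  linear_combination heq

lemma qpow_sub' (hadd : ∀ a b : F, (a + b) ^ q = a ^ q + b ^ q) (a b : F) :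
    (a - b) ^ q = a ^ q - b ^ q := by
  have := hadd (a - b) b
  rw [sub_add_cancel] at this
  linear_combination -this

lemma herm_add {A B : Matrix m m F} (hadd : ∀ a b : F, (a + b) ^ q = a ^ q + b ^ q)
    (hA : IsHerm q A) (hB : IsHerm q B) : IsHerm q (A + B) := by
  ext i j
  show ((A + B) j i) ^ q = (A + B) i j
  rw [Matrix.add_apply, Matrix.add_apply, hadd, herm_entry hA, herm_entry hB]

lemma herm_sub {A B : Matrix m m F} (hadd : ∀ a b : F, (a + b) ^ q = a ^ q + b ^ q)
    (hA : IsHerm q A) (hB : IsHerm q B) : IsHerm q (A - B) := by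
  ext i j
  show ((A - B) j i) ^ q = (A - B) i j
  rw [Matrix.sub_apply, Matrix.sub_apply, qpow_sub' hadd, herm_entry hA, herm_entry hB]

lemma herm_smul {A : Matrix m m F} {c : F} (hc : c ^ q = c) (hA : IsHerm q A) :
    IsHerm q (c • A) := by
  ext i j
  show ((c • A) j i) ^ q = (c • A) i j
  rw [Matrix.smul_apply, Matrix.smul_apply, smul_eq_mul, smul_eq_mul, mul_pow, hc,
    herm_entry hA]

lemma herm_outerq (hqq : ∀ a : F, (a ^ q) ^ q = a) (x : m → F) : IsHerm q (outerq q x) := by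
  ext i j
  show (x j * x i ^ q) ^ q = x i * x j ^ q
  rw [mul_pow, hqq]
  ring

lemma outerq_smul_vec (b : F) (x : m → F) :
    outerq q (b • x) = (b * b ^ q) • outerq q x := by
  ext i j
  show (b • x) i * ((b • x) j) ^ q = (b * b ^ q) * (x i * x j ^ q)
  simp only [Pi.smul_apply, smul_eq_mul, mul_pow]
  ring

end HermAux


lemma qpow_add {q : ℕ} {F : Type*} [Field F] [Fintype F]
    (hq : IsPrimePow q) (hF : Fintype.card F = q ^ 2) (a b : F) :
    (a + b) ^ q = a ^ q + b ^ q := by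
  obtain ⟨p, k, hp, hk, rfl⟩ := hq
  have hp' : Nat.Prime p := Nat.prime_iff.mpr hp
  haveI : Fact (Nat.Prime p) := ⟨hp'⟩
  have hcast : ((Fintype.card F : ℕ) : F) = 0 := FiniteField.cast_card_eq_zero F
  have hdvd : ringChar F ∣ p ^ (k * 2) := by
    have := (CharP.cast_eq_zero_iff F (ringChar F) (Fintype.card F)).mp hcast
    rwa [hF, ← pow_mul] at this
  have hchar : Nat.Prime (ringChar F) := CharP.char_is_prime F (ringChar F)
  have : ringChar F = p := by
    have h2 := hchar.dvd_of_dvd_pow hdvd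
    exact (Nat.prime_dvd_prime_iff_eq hchar hp').mp h2
  haveI : CharP F p := this ▸ ringChar.charP F
  exact add_pow_char_pow a b p k


lemma sq_sub_one_eq {q : ℕ} (hq3 : 3 ≤ q) : (q + 1) * (q - 1) = q ^ 2 - 1 := by
  have hq1 : 1 ≤ q := by omega
  have hq2 : 1 ≤ q ^ 2 := Nat.one_le_pow _ _ (by omega)
  zify [hq1, hq2]; ring

lemma norm_surj {q : ℕ} {F : Type*} [Field F] [Fintype F]
    (hq3 : 3 ≤ q) (hF : Fintype.card F = q ^ 2) :
    ∀ a : F, a ^ q = a → a ≠ 0 → ∃ b : F, b ≠ 0 ∧ b * b ^ q = a := by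
  classical
  intro a haq ha
  obtain ⟨g, hg⟩ := IsCyclic.exists_generator (α := Fˣ)
  have horder : orderOf g = q ^ 2 - 1 := by
    rw [orderOf_eq_card_of_forall_mem_zpowers hg, Nat.card_eq_fintype_card,
      Fintype.card_units, hF]
  set u : Fˣ := Units.mk0 a ha with hu
  obtain ⟨m, hm⟩ := (mem_powers_iff_mem_zpowers).mpr (hg u)
  simp only [] at hm
  have hqm1 : a ^ (q - 1) = 1 := by
    have h1 : a ^ (q - 1) * a = a ^ q := by
      rw [← pow_succ]; congr 1; omega
    rw [haq] at h1
    field_simp at h1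
    exact h1
  have hum : u ^ (q - 1) = 1 := by
    ext; push_cast; exact hqm1
  have hdvd : q ^ 2 - 1 ∣ m * (q - 1) := by
    rw [← horder]
    apply orderOf_dvd_of_pow_eq_one
    rw [pow_mul]
    rw [show g ^ m = u from hm, hum]
  have hdvd2 : q + 1 ∣ m := by
    have h := hdvd
    rw [← sq_sub_one_eq hq3] at h
    exact (Nat.mul_dvd_mul_iff_right (show 0 < q - 1 by omega)).mp h
  obtain ⟨t, rfl⟩ := hdvd2
  refine ⟨((g ^ t : Fˣ) : F), Units.ne_zero _, ?_⟩
  have : ((g ^ t : Fˣ) : F) * ((g ^ t : Fˣ) : F) ^ q = ((g ^ ((q + 1) * t) : Fˣ) : F) := by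
    push_cast
    rw [← pow_succ']
    rw [← pow_mul]
    congr 1
    ring
  rw [this, show g ^ ((q+1)*t) = u from hm]
  simp [hu]

open Polynomial in
lemma card_fixed {q : ℕ} {F : Type*} [Field F] [Fintype F] [DecidableEq F]
    (hq3 : 3 ≤ q) (hF : Fintype.card F = q ^ 2) :
    (Finset.univ.filter (fun c : F => c ^ q = c)).card = q := by
  obtain ⟨g, hg⟩ := IsCyclic.exists_generator (α := Fˣ)
  have horder : orderOf g = q ^ 2 - 1 := by
    rw [orderOf_eq_card_of_forall_mem_zpowers hg, Nat.card_eq_fintype_card,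
      Fintype.card_units, hF]
  have hdvd : (q + 1) ∣ q ^ 2 - 1 := ⟨q - 1, (sq_sub_one_eq hq3).symm⟩
  have hordh : orderOf ((g ^ (q + 1) : Fˣ) : F) = q - 1 := by
    rw [orderOf_units, orderOf_pow, horder, Nat.gcd_eq_right hdvd,
      ← sq_sub_one_eq hq3, Nat.mul_div_cancel_left _ (by omega)]
  have hprim : IsPrimitiveRoot ((g ^ (q + 1) : Fˣ) : F) (q - 1) := by
    have := IsPrimitiveRoot.orderOf ((g ^ (q + 1) : Fˣ) : F)
    rwa [hordh] at this
  have hcard : (nthRootsFinset (q - 1) (1 : F)).card = q - 1 := hprim.card_nthRootsFinset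
  have hset : (Finset.univ.filter (fun c : F => c ^ q = c)) =
      insert (0 : F) (nthRootsFinset (q - 1) (1 : F)) := by
    ext c
    simp only [Finset.mem_filter, Finset.mem_univ, true_and, Finset.mem_insert,
      mem_nthRootsFinset (show 0 < q - 1 by omega)]
    constructor
    · intro hc
      by_cases h0 : c = 0
      · exact Or.inl h0
      · right
        have h1 : c ^ (q - 1) * c = c ^ q := by rw [← pow_succ]; congr 1; omega
        rw [hc] at h1
        field_simp at h1
        exact h1
    · rintro (rfl | hc)
      · exact zero_pow (by omega)
      · have : c ^ q = c ^ (q - 1) * c := by rw [← pow_succ]; congr 1; omega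
        rw [this, hc, one_mul]
  rw [hset, Finset.card_insert_of_notMem (fun h => ne_zero_of_mem_nthRootsFinset one_ne_zero h rfl), hcard]
  omega


/-- **Lemma 2.4.** Let `q ≥ 3`, `1 ≤ r ≤ n`, and let `U` be the set of hermitian `n × n`
matrices of rank `r`.  If `L ⊆ U` is a leaf of some hermitian matrix of rank `r − 1` and
`Φ : U → U` is a bijection preserving adjacency in both directions, then `Φ(L)` is a leaf
of a unique hermitian matrix of rank `r − 1`. -/
theorem stmt4 (q r n : ℕ) (hq : IsPrimePow q) (hq3 : 3 ≤ q) (hr : 1 ≤ r) (hrn : r ≤ n)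
    (F : Type*) [Field F] [Fintype F] (hF : Fintype.card F = q ^ 2)
    (Φ : {A : Matrix (Fin n) (Fin n) F // IsHerm q A ∧ A.rank = r} →
      {A : Matrix (Fin n) (Fin n) F // IsHerm q A ∧ A.rank = r})
    (hbij : Function.Bijective Φ)
    (hpres : ∀ A B : {A : Matrix (Fin n) (Fin n) F // IsHerm q A ∧ A.rank = r},
      ((Φ A).1 - (Φ B).1).rank = 1 ↔ (A.1 - B.1).rank = 1)
    (L : Set {A : Matrix (Fin n) (Fin n) F // IsHerm q A ∧ A.rank = r})
    (hL : ∃ N₀ : Matrix (Fin n) (Fin n) F, IsHerm q N₀ ∧ N₀.rank = r - 1 ∧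
      IsLeafOf q (Subtype.val '' L) N₀) :
    ∃! N : Matrix (Fin n) (Fin n) F, IsHerm q N ∧ N.rank = r - 1 ∧
      IsLeafOf q (Subtype.val '' (Φ '' L)) N := by
  classical
  obtain ⟨N₀, hN₀h, hN₀r, hleaf⟩ := hL
  obtain ⟨x, hx0, hLeq, hLrank⟩ := hleaf
  have hq0 : q ≠ 0 := by omega
  have hadd : ∀ a b : F, (a + b) ^ q = a ^ q + b ^ q := qpow_add hq hF
  have hqq : ∀ a : F, (a ^ q) ^ q = a := by
    intro a
    rw [← pow_mul, show q * q = Fintype.card F by rw [hF]; ring]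
    exact FiniteField.pow_card a
  have hnorm : ∀ a : F, a ^ q = a → a ≠ 0 → ∃ b : F, b ≠ 0 ∧ b * b ^ q = a :=
    norm_surj hq3 hF
  set X := outerq q x with hX
  have hX0 : X ≠ 0 := HermAux.outerq_ne_zero hx0
  set Sfin : Finset F := Finset.univ.filter (fun c : F => c ^ q = c) with hSfin
  have hScard : Sfin.card = q := card_fixed hq3 hF
  have hrm1 : r - 1 + 1 = r := by omega
  -- lift the leaf elements to the subtype
  have hUS : ∀ lam : F, lam ^ q = lam → lam ≠ 0 →
      ∃ a : {A : Matrix (Fin n) (Fin n) F // IsHerm q A ∧ A.rank = r}, a ∈ L ∧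
        (a : Matrix (Fin n) (Fin n) F) = N₀ + lam • X := by
    intro lam h1 h2
    have hmem : (N₀ + lam • X) ∈ Subtype.val '' L := by
      rw [hLeq]; exact ⟨lam, h1, h2, rfl⟩
    obtain ⟨a, haL, hav⟩ := hmem
    exact ⟨a, haL, hav⟩
  have key : ∀ lam : F, ∃ a : {A : Matrix (Fin n) (Fin n) F // IsHerm q A ∧ A.rank = r},
      (lam ^ q = lam ∧ lam ≠ 0) →
        (a ∈ L ∧ (a : Matrix (Fin n) (Fin n) F) = N₀ + lam • X) := by
    intro lam
    by_cases hcase : lam ^ q = lam ∧ lam ≠ 0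
    · obtain ⟨a, h1, h2⟩ := hUS lam hcase.1 hcase.2
      exact ⟨a, fun _ => ⟨h1, h2⟩⟩
    · obtain ⟨a, h1, h2⟩ := hUS 1 (one_pow q) one_ne_zero
      exact ⟨a, fun hc => absurd hc hcase⟩
  choose AL hAL using key
  have hALval : ∀ lam : F, lam ^ q = lam → lam ≠ 0 →
      (AL lam : Matrix (Fin n) (Fin n) F) = N₀ + lam • X :=
    fun lam h1 h2 => (hAL lam ⟨h1, h2⟩).2
  have hALmem : ∀ lam : F, lam ^ q = lam → lam ≠ 0 → AL lam ∈ L :=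
    fun lam h1 h2 => (hAL lam ⟨h1, h2⟩).1
  set M : F → Matrix (Fin n) (Fin n) F :=
    fun lam => ((Φ (AL lam)) : Matrix (Fin n) (Fin n) F) with hM
  have hMherm : ∀ lam : F, IsHerm q (M lam) := fun lam => (Φ (AL lam)).2.1
  have hMrank : ∀ lam : F, (M lam).rank = r := fun lam => (Φ (AL lam)).2.2
  have hMadj : ∀ lam₁ lam₂ : F, lam₁ ^ q = lam₁ → lam₁ ≠ 0 → lam₂ ^ q = lam₂ → lam₂ ≠ 0 →
      lam₁ ≠ lam₂ → (M lam₁ - M lam₂).rank = 1 := by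
    intro lam₁ lam₂ h1 h2 h3 h4 hne
    apply (hpres (AL lam₁) (AL lam₂)).mpr
    rw [hALval lam₁ h1 h2, hALval lam₂ h3 h4]
    have heq : (N₀ + lam₁ • X) - (N₀ + lam₂ • X) = (lam₁ - lam₂) • X := by module
    rw [heq]
    exact HermAux.rank_smul_outerq (sub_ne_zero.mpr hne) hx0
  have hMinj : ∀ lam₁ lam₂ : F, lam₁ ^ q = lam₁ → lam₁ ≠ 0 → lam₂ ^ q = lam₂ → lam₂ ≠ 0 →
      M lam₁ = M lam₂ → lam₁ = lam₂ := by
    intro lam₁ lam₂ h1 h2 h3 h4 heq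
    have h5 : Φ (AL lam₁) = Φ (AL lam₂) := Subtype.ext heq
    have h6 : AL lam₁ = AL lam₂ := hbij.1 h5
    have h7 := congrArg Subtype.val h6
    rw [hALval lam₁ h1 h2, hALval lam₂ h3 h4] at h7
    have h8 : (lam₁ - lam₂) • X = 0 := by
      linear_combination (norm := module) h7
    rcases smul_eq_zero.mp h8 with h9 | h9
    · exact sub_eq_zero.mp h9
    · exact absurd h9 hX0
  -- pick a second element μ₀ of the fixed field
  have h0S : (0 : F) ∈ Sfin := by simp [hSfin, zero_pow hq0]
  have h1S : (1 : F) ∈ Sfin := by simp [hSfin]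
  have hcard' : 1 < (Sfin.erase 0).card := by
    rw [Finset.card_erase_of_mem h0S, hScard]; omega
  obtain ⟨μ₀, hμ₀mem, hμ₀ne1⟩ := Finset.exists_mem_ne hcard' 1
  have hμ₀0 : μ₀ ≠ 0 := (Finset.mem_erase.mp hμ₀mem).1
  have hμ₀S : μ₀ ^ q = μ₀ := by
    have := (Finset.mem_erase.mp hμ₀mem).2
    simpa [hSfin] using this
  -- the direction y of the image leaf
  have hD : (M μ₀ - M 1).rank = 1 := hMadj μ₀ 1 hμ₀S hμ₀0 (one_pow q) one_ne_zero hμ₀ne1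
  have hDh : IsHerm q (M μ₀ - M 1) := HermAux.herm_sub hadd (hMherm μ₀) (hMherm 1)
  obtain ⟨y, hy0, hDy⟩ := HermAux.herm_rank_one hqq hnorm hDh hD
  set Y := outerq q y with hY
  have hY0 : Y ≠ 0 := HermAux.outerq_ne_zero hy0
  -- the coefficients cf lam with M lam = M 1 + cf lam • Y
  have hcfex : ∀ lam : F, ∃ cc : F, (lam ^ q = lam ∧ lam ≠ 0) →
      (cc ^ q = cc ∧ M lam = M 1 + cc • Y ∧ (lam ≠ 1 → cc ≠ 0)) := by
    intro lam
    by_cases hcase : lam ^ q = lam ∧ lam ≠ 0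
    · by_cases h1 : lam = 1
      · exact ⟨0, fun _ => ⟨by rw [zero_pow hq0], by rw [h1, zero_smul, add_zero],
          fun hn => absurd h1 hn⟩⟩
      · by_cases hμ : lam = μ₀
        · refine ⟨1, fun _ => ⟨one_pow q, ?_, fun _ => one_ne_zero⟩⟩
          rw [hμ, one_smul, ← hDy]; module
        · have hrank1 : (M lam - M 1).rank = 1 :=
            hMadj lam 1 hcase.1 hcase.2 (one_pow q) one_ne_zero h1
          obtain ⟨z, hz0, hz⟩ := HermAux.herm_rank_one hqq hnorm
            (HermAux.herm_sub hadd (hMherm lam) (hMherm 1)) hrank1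
          have hzy : (outerq q z - outerq q y).rank ≤ 1 := by
            have heq2 : outerq q z - outerq q y = M lam - M μ₀ := by
              rw [← hz, ← hY, ← hDy]; module
            rw [heq2]
            exact le_of_eq (hMadj lam μ₀ hcase.1 hcase.2 hμ₀S hμ₀0 hμ)
          obtain ⟨t, ht0, hty⟩ := HermAux.exists_smul_eq_of_rank_le_one hqq hz0 hy0 hzy
          have htt0 : t * t ^ q ≠ 0 := mul_ne_zero ht0 (pow_ne_zero _ ht0)
          have hYz : Y = (t * t ^ q) • outerq q z := by
            rw [hY, hty, HermAux.outerq_smul_vec]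
          refine ⟨(t * t ^ q)⁻¹, fun _ => ⟨?_, ?_, fun _ => inv_ne_zero htt0⟩⟩
          · rw [inv_pow, mul_pow, hqq]
            rw [mul_comm (t ^ q) t]
          · have houter : outerq q z = (t * t ^ q)⁻¹ • Y := by
              rw [hYz, smul_smul, inv_mul_cancel₀ htt0, one_smul]
            rw [← houter, ← hz]; module
    · exact ⟨0, fun hc => absurd hc hcase⟩
  choose cf hcf using hcfex
  have hcf1 : cf 1 = 0 := by
    have h := (hcf 1 ⟨one_pow q, one_ne_zero⟩).2.1
    have h2 : cf 1 • Y = 0 := by linear_combination (norm := module) -h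
    rcases smul_eq_zero.mp h2 with h3 | h3
    · exact h3
    · exact absurd h3 hY0
  have hcfinj : Set.InjOn cf (Sfin.erase 0) := by
    intro lam₁ h₁ lam₂ h₂ heq
    have c₁ := Finset.mem_erase.mp h₁
    have c₂ := Finset.mem_erase.mp h₂
    have s₁ : lam₁ ^ q = lam₁ := by simpa [hSfin] using c₁.2
    have s₂ : lam₂ ^ q = lam₂ := by simpa [hSfin] using c₂.2
    apply hMinj lam₁ lam₂ s₁ c₁.1 s₂ c₂.1
    rw [(hcf lam₁ ⟨s₁, c₁.1⟩).2.1, (hcf lam₂ ⟨s₂, c₂.1⟩).2.1, heq]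
  set I : Finset F := (Sfin.erase 0).image cf with hI
  have hIcard : I.card = q - 1 := by
    rw [hI, Finset.card_image_of_injOn hcfinj, Finset.card_erase_of_mem h0S, hScard]
  have hIsub : I ⊆ Sfin := by
    intro e he
    obtain ⟨lam, hlam, rfl⟩ := Finset.mem_image.mp he
    have c₁ := Finset.mem_erase.mp hlam
    have s₁ : lam ^ q = lam := by simpa [hSfin] using c₁.2
    have := (hcf lam ⟨s₁, c₁.1⟩).1
    simp [hSfin, this]
  have hsd : (Sfin \ I).card = 1 := by
    rw [Finset.card_sdiff_of_subset hIsub, hScard, hIcard]; omega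
  obtain ⟨d, hd⟩ := Finset.card_eq_one.mp hsd
  have hdmem : d ∈ Sfin ∧ d ∉ I := by
    have : d ∈ Sfin \ I := by rw [hd]; exact Finset.mem_singleton_self d
    exact ⟨(Finset.mem_sdiff.mp this).1, (Finset.mem_sdiff.mp this).2⟩
  have hdS : d ^ q = d := by simpa [hSfin] using hdmem.1
  have h0I : (0 : F) ∈ I := by
    rw [hI]
    apply Finset.mem_image.mpr
    exact ⟨1, by simp [Finset.mem_erase, hSfin], hcf1⟩
  have hd0 : d ≠ 0 := fun h => hdmem.2 (h ▸ h0I)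
  have hmissed : ∀ e, e ∈ Sfin → e ∉ I → e = d := by
    intro e he hni
    have : e ∈ Sfin \ I := Finset.mem_sdiff.mpr ⟨he, hni⟩
    rw [hd] at this
    exact Finset.mem_singleton.mp this
  have hcfne : ∀ lam : F, lam ^ q = lam → lam ≠ 0 → cf lam ≠ d := by
    intro lam h1 h2 heq
    apply hdmem.2
    rw [← heq, hI]
    apply Finset.mem_image.mpr
    exact ⟨lam, by simp [Finset.mem_erase, hSfin, h1, h2], rfl⟩
  set N : Matrix (Fin n) (Fin n) F := M 1 + d • Y with hN
  have hMN : ∀ lam : F, lam ^ q = lam → lam ≠ 0 → M lam = N + (cf lam - d) • Y := by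
    intro lam h1 h2
    rw [hN, (hcf lam ⟨h1, h2⟩).2.1]; module
  -- the set equality
  have hTeq : Subtype.val '' (Φ '' L) = leafSet q N y := by
    ext B
    constructor
    · rintro ⟨aΦ, ⟨a, haL, rfl⟩, rfl⟩
      have hmem : (a : Matrix (Fin n) (Fin n) F) ∈ Subtype.val '' L := ⟨a, haL, rfl⟩
      rw [hLeq] at hmem
      obtain ⟨lam, h1, h2, h3⟩ := hmem
      have haAL : a = AL lam := Subtype.ext (by rw [hALval lam h1 h2]; exact h3)
      refine ⟨cf lam - d, ?_, ?_, ?_⟩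
      · rw [HermAux.qpow_sub' hadd, (hcf lam ⟨h1, h2⟩).1, hdS]
      · exact sub_ne_zero.mpr (hcfne lam h1 h2)
      · rw [haAL]
        exact hMN lam h1 h2
    · rintro ⟨e, he1, he2, rfl⟩
      have hdeS : (d + e) ^ q = d + e := by rw [hadd, hdS, he1]
      have hdeI : d + e ∈ I := by
        by_contra hni
        have : d + e ∈ Sfin := by simp [hSfin, hdeS]
        have := hmissed (d + e) this hni
        exact he2 (by linear_combination this)
      obtain ⟨lam, hlam, hcflam⟩ := Finset.mem_image.mp hdeI
      have c₁ := Finset.mem_erase.mp hlam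
      have s₁ : lam ^ q = lam := by simpa [hSfin] using c₁.2
      have hcfval := (hcf lam ⟨s₁, c₁.1⟩).2.1
      have hBeq : N + e • Y = M lam := by
        rw [hcfval, hcflam, hN]; module
      rw [hBeq]
      exact ⟨Φ (AL lam), ⟨AL lam, hALmem lam s₁ c₁.1, rfl⟩, rfl⟩
  have hrankLeaf : ∀ B ∈ leafSet q N y, Matrix.rank B = r := by
    intro B hB
    rw [← hTeq] at hB
    obtain ⟨aΦ, ⟨a, haL, rfl⟩, rfl⟩ := hB
    exact (Φ a).2.2
  -- hermitian
  have hNherm : IsHerm q N := by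
    rw [hN]
    exact HermAux.herm_add hadd (hMherm 1)
      (HermAux.herm_smul hdS (HermAux.herm_outerq hqq y))
  -- rank bounds
  have hmem1 : (N + (1 : F) • Y) ∈ leafSet q N y := ⟨1, one_pow q, one_ne_zero, rfl⟩
  have hmemμ : (N + μ₀ • Y) ∈ leafSet q N y := ⟨μ₀, hμ₀S, hμ₀0, rfl⟩
  have hNle : N.rank ≤ r :=
    HermAux.rank_center_le (Ne.symm hμ₀ne1) (hrankLeaf _ hmem1) (hrankLeaf _ hmemμ)
  have hNge : r ≤ N.rank + 1 := by
    have h1 := HermAux.matrank_add_le N ((1 : F) • Y)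
    have h2 : ((1 : F) • Y).rank = 1 := HermAux.rank_smul_outerq one_ne_zero hy0
    have h3 := hrankLeaf _ hmem1
    omega
  have hNner : N.rank ≠ r := by
    intro hNr
    obtain ⟨B, hB⟩ := hbij.2 ⟨N, hNherm, hNr⟩
    have hadjB : ∀ lam : F, lam ^ q = lam → lam ≠ 0 →
        ((B : Matrix (Fin n) (Fin n) F) - (AL lam : Matrix (Fin n) (Fin n) F)).rank = 1 := by
      intro lam h1 h2
      apply (hpres B (AL lam)).mp
      rw [hB]
      show (N - M lam).rank = 1
      have heq3 : N - M lam = (d - cf lam) • Y := by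
        rw [hMN lam h1 h2]; module
      rw [heq3]
      exact HermAux.rank_smul_outerq (sub_ne_zero.mpr (Ne.symm (hcfne lam h1 h2))) hy0
    have hG1r : ((B : Matrix (Fin n) (Fin n) F) - (AL 1 : Matrix (Fin n) (Fin n) F)).rank = 1 :=
      hadjB 1 (one_pow q) one_ne_zero
    have hG2r : ((B : Matrix (Fin n) (Fin n) F) - (AL μ₀ : Matrix (Fin n) (Fin n) F)).rank = 1 :=
      hadjB μ₀ hμ₀S hμ₀0
    obtain ⟨z₁, hz₁0, hz₁⟩ := HermAux.herm_rank_one hqq hnorm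
      (HermAux.herm_sub hadd B.2.1 (AL 1).2.1) hG1r
    obtain ⟨z₂, hz₂0, hz₂⟩ := HermAux.herm_rank_one hqq hnorm
      (HermAux.herm_sub hadd B.2.1 (AL μ₀).2.1) hG2r
    have hALdiff : (AL μ₀ : Matrix (Fin n) (Fin n) F) - (AL 1 : Matrix (Fin n) (Fin n) F) =
        (μ₀ - 1) • X := by
      rw [hALval μ₀ hμ₀S hμ₀0, hALval 1 (one_pow q) one_ne_zero]; module
    have houter : (outerq q z₁ - outerq q z₂).rank ≤ 1 := by
      have heq4 : outerq q z₁ - outerq q z₂ = (μ₀ - 1) • X := by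
        rw [← hz₁, ← hz₂, ← hALdiff]; module
      rw [heq4]
      exact le_of_eq (HermAux.rank_smul_outerq (sub_ne_zero.mpr hμ₀ne1) hx0)
    obtain ⟨t, ht0, htz⟩ := HermAux.exists_smul_eq_of_rank_le_one hqq hz₁0 hz₂0 houter
    set s : F := t * t ^ q with hs
    have hs0 : s ≠ 0 := mul_ne_zero ht0 (pow_ne_zero _ ht0)
    have hsS : s ^ q = s := by rw [hs, mul_pow, hqq, mul_comm (t ^ q) t]
    have hG2s : (B : Matrix (Fin n) (Fin n) F) - (AL μ₀ : Matrix (Fin n) (Fin n) F) =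
        s • ((B : Matrix (Fin n) (Fin n) F) - (AL 1 : Matrix (Fin n) (Fin n) F)) := by
      rw [hz₂, hz₁, htz, HermAux.outerq_smul_vec, ← hs]
    have hs1 : s ≠ 1 := by
      intro h1s
      rw [h1s, one_smul] at hG2s
      have hdd : (μ₀ - 1) • X = 0 := by
        rw [← hALdiff]
        linear_combination (norm := module) -hG2s
      rcases smul_eq_zero.mp hdd with h | h
      · exact hμ₀ne1 (by linear_combination h)
      · exact hX0 h
    have h1s0 : (1 : F) - s ≠ 0 := sub_ne_zero.mpr (Ne.symm hs1)
    have hG1X : ((1 : F) - s) • ((B : Matrix (Fin n) (Fin n) F) -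
        (AL 1 : Matrix (Fin n) (Fin n) F)) = (μ₀ - 1) • X := by
      linear_combination (norm := module) hALdiff + hG2s
    have hG1 : (B : Matrix (Fin n) (Fin n) F) - (AL 1 : Matrix (Fin n) (Fin n) F) =
        (((1 : F) - s)⁻¹ * (μ₀ - 1)) • X := by
      calc (B : Matrix (Fin n) (Fin n) F) - (AL 1 : Matrix (Fin n) (Fin n) F)
          = ((1 : F) - s)⁻¹ • ((((1 : F) - s)) • ((B : Matrix (Fin n) (Fin n) F) -
            (AL 1 : Matrix (Fin n) (Fin n) F))) := by
            rw [smul_smul, inv_mul_cancel₀ h1s0, one_smul]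
        _ = ((1 : F) - s)⁻¹ • ((μ₀ - 1) • X) := by rw [hG1X]
        _ = (((1 : F) - s)⁻¹ * (μ₀ - 1)) • X := by rw [smul_smul]
    set ww : F := ((1 : F) - s)⁻¹ * (μ₀ - 1) with hww
    have hwwS : ww ^ q = ww := by
      rw [hww, mul_pow, inv_pow, HermAux.qpow_sub' hadd, HermAux.qpow_sub' hadd,
        one_pow, hsS, hμ₀S]
    have hww0 : ww ≠ 0 :=
      mul_ne_zero (inv_ne_zero h1s0) (sub_ne_zero.mpr hμ₀ne1)
    have hBval : (B : Matrix (Fin n) (Fin n) F) = N₀ + ((1 : F) + ww) • X := by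
      have h5 := hG1
      rw [hALval 1 (one_pow q) one_ne_zero] at h5
      linear_combination (norm := module) h5
    have heS : ((1 : F) + ww) ^ q = (1 : F) + ww := by rw [hadd, one_pow, hwwS]
    have he0 : (1 : F) + ww ≠ 0 := by
      intro h0
      have h6 : (B : Matrix (Fin n) (Fin n) F) = N₀ := by
        rw [hBval, h0, zero_smul, add_zero]
      have hBr := B.2.2
      rw [h6, hN₀r] at hBr
      omega
    have hBL : B ∈ L := by
      have hmem : (B : Matrix (Fin n) (Fin n) F) ∈ Subtype.val '' L := by
        rw [hLeq]; exact ⟨(1 : F) + ww, heS, he0, hBval⟩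
      obtain ⟨a, haL, hav⟩ := hmem
      have : a = B := Subtype.ext hav
      rwa [← this]
    have hNin : N ∈ leafSet q N y := by
      rw [← hTeq]
      exact ⟨Φ B, ⟨B, hBL, rfl⟩, congrArg Subtype.val hB⟩
    obtain ⟨e', he'S, he'0, hNe⟩ := hNin
    have h7 : e' • Y = 0 := by linear_combination (norm := module) -hNe
    rcases smul_eq_zero.mp h7 with h | h
    · exact he'0 h
    · exact hY0 h
  have hNrank : N.rank = r - 1 := by omega
  refine ⟨N, ⟨hNherm, hNrank, y, hy0, hTeq, ?_⟩, ?_⟩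
  · intro B hB
    rw [hNrank, hrm1]
    rw [hTeq] at hB
    exact hrankLeaf B hB
  · rintro N' ⟨hN'h, hN'r, y', hy'0, hTeq', hrank'⟩
    have hsets : leafSet q N y = leafSet q N' y' := by
      rw [← hTeq]
      exact hTeq'
    have h1' := hmem1
    rw [hsets] at h1'
    obtain ⟨f₁, hf₁S, hf₁0, hB₁⟩ := h1'
    have hμ' := hmemμ
    rw [hsets] at hμ'
    obtain ⟨f₂, hf₂S, hf₂0, hB₂⟩ := hμ'
    have hdiff : ((1 : F) - μ₀) • Y = (f₁ - f₂) • outerq q y' := by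
      linear_combination (norm := module) hB₁ - hB₂
    have hf12 : f₁ - f₂ ≠ 0 := by
      intro h0
      rw [h0, zero_smul] at hdiff
      rcases smul_eq_zero.mp hdiff with h | h
      · exact hμ₀ne1 (by linear_combination -h)
      · exact hY0 h
    have hY' : outerq q y' = ((f₁ - f₂)⁻¹ * ((1 : F) - μ₀)) • Y := by
      calc outerq q y' = (f₁ - f₂)⁻¹ • ((f₁ - f₂) • outerq q y') := by
            rw [smul_smul, inv_mul_cancel₀ hf12, one_smul]
        _ = (f₁ - f₂)⁻¹ • (((1 : F) - μ₀) • Y) := by rw [hdiff]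
        _ = ((f₁ - f₂)⁻¹ * ((1 : F) - μ₀)) • Y := by rw [smul_smul]
    set k : F := (f₁ - f₂)⁻¹ * ((1 : F) - μ₀) with hk
    have hkS : k ^ q = k := by
      rw [hk, mul_pow, inv_pow, HermAux.qpow_sub' hadd, HermAux.qpow_sub' hadd,
        one_pow, hf₁S, hf₂S, hμ₀S]
    have hN' : N' = N + ((1 : F) - f₁ * k) • Y := by
      rw [hY'] at hB₁
      rw [smul_smul] at hB₁
      linear_combination (norm := module) -hB₁
    have hδS : ((1 : F) - f₁ * k) ^ q = (1 : F) - f₁ * k := by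
      rw [HermAux.qpow_sub' hadd, one_pow, mul_pow, hf₁S, hkS]
    by_cases hδ : (1 : F) - f₁ * k = 0
    · rw [hN', hδ, zero_smul, add_zero]
    · exfalso
      have hN'mem : N' ∈ leafSet q N y := ⟨(1 : F) - f₁ * k, hδS, hδ, hN'⟩
      rw [hsets] at hN'mem
      obtain ⟨e', he'S, he'0, hNe⟩ := hN'mem
      have h7 : e' • outerq q y' = 0 := by linear_combination (norm := module) -hNe
      rcases smul_eq_zero.mp h7 with h | h
      · exact he'0 h
      · exact HermAux.outerq_ne_zero hy'0 h
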